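/- Let y₁ ≥ y₂ ≥ … ≥ y_m be reals and let σ₁,…,σ_{2^k} be permutations of [m] constructed greedily: σ₁ is the identity, and for each ℓ ≥ 2, σ_ℓ assigns the values y₁ ≥ … ≥ y_m to positions in increasing order of the partial sums Ŝ_j = Σ_{i<ℓ} y_{σ_i(j)} (largest value to smallest partial sum). Then (1/(2^{2k} m)) Σ_{j=1}^m (Σ_{i=1}^{2^k} y_{σ_i(j)})² − μ² ≤ (1/2^k)(E[Y²] − μ²), where μ = (1/m) Σ_j y_j and E[Y²] = (1/m) Σ_j y_j². -/

import Mathlib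

/-- Expectation of `f` under mass function `p` on a finite sample space. -/
noncomputable def pexp {Ω : Type*} [Fintype Ω] (p : Ω → ℝ) (f : Ω → ℝ) : ℝ :=
  ∑ ω, p ω * f ω

/-- Variance of `f` under mass function `p`. -/
noncomputable def pvar {Ω : Type*} [Fintype Ω] (p : Ω → ℝ) (f : Ω → ℝ) : ℝ :=
  pexp p (fun ω => (f ω - pexp p f) ^ 2)

/-- Minimum mean-squared error of estimating `Y` from the observation `τ`:
the infimum over all estimators `h` of `E[(Y - h(τ))²]`. -/
noncomputable def pmmse {Ω T : Type*} [Fintype Ω] (p : Ω → ℝ) (Y : Ω → ℝ) (τ : Ω → T) : ℝ :=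
  sInf {e : ℝ | ∃ h : T → ℝ, e = pexp p (fun ω => (Y ω - h (τ ω)) ^ 2)}

/-- Conditional expectation `E[Y | τ = t]` (with the junk value `0` on null events). -/
noncomputable def pcond {Ω T : Type*} [Fintype Ω] [DecidableEq T]
    (p : Ω → ℝ) (Y : Ω → ℝ) (τ : Ω → T) (t : T) : ℝ :=
  (∑ ω ∈ Finset.univ.filter (fun ω => τ ω = t), p ω * Y ω) /
    (∑ ω ∈ Finset.univ.filter (fun ω => τ ω = t), p ω)


lemma sq_sum_eq_aux {ι : Type*} [LinearOrder ι] (s : Finset ι) (a : ι → ℝ) :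
    (∑ i ∈ s, a i) ^ 2 =
      ∑ i ∈ s, a i ^ 2 + 2 * ∑ i ∈ s, a i * ∑ j ∈ s.filter (· < i), a j := by
  classical
  induction s using Finset.induction_on_max with
  | empty => simp
  | insert b s hb ih =>
    have hbs : b ∉ s := fun h => lt_irrefl b (hb b h)
    have h1 : (insert b s).filter (· < b) = s := by
      ext x; simp only [Finset.mem_filter, Finset.mem_insert]
      constructor
      · rintro ⟨h | h, hlt⟩
        · exact absurd hlt (by simp [h])
        · exact h
      · exact fun h => ⟨Or.inr h, hb x h⟩
    have h2 : ∀ i ∈ s, (insert b s).filter (· < i) = s.filter (· < i) := by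
      intro i hi
      ext x; simp only [Finset.mem_filter, Finset.mem_insert]
      constructor
      · rintro ⟨h | h, hlt⟩
        · exact absurd hlt (by simp [h, (hb i hi).not_gt])
        · exact ⟨h, hlt⟩
      · exact fun ⟨h, hlt⟩ => ⟨Or.inr h, hlt⟩
    have h3 : ∑ x ∈ s, a x * ∑ i ∈ (insert b s).filter (· < x), a i =
        ∑ x ∈ s, a x * ∑ i ∈ s.filter (· < x), a i :=
      Finset.sum_congr rfl fun i hi => by rw [h2 i hi]
    rw [Finset.sum_insert hbs, Finset.sum_insert hbs, Finset.sum_insert hbs, h1, h3, add_sq, ih]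
    ring

lemma gauss_real (n : ℕ) : ∑ i ∈ Finset.range n, (i : ℝ) = n * (n - 1) / 2 := by
  induction n with
  | zero => simp
  | succ n ih => rw [Finset.sum_range_succ, ih]; push_cast; ring

/-- The greedy permutation construction (Algorithm 1): at each step `ℓ` the new values are
assigned oppositely ordered to the accumulated partial sums; then the distortion gap is at
most `var(Y)/2^k`. -/
theorem stmt4 (m k : ℕ) (hm : 0 < m) (y : Fin m → ℝ)
    (hy : ∀ i j : Fin m, i ≤ j → y j ≤ y i)
    (σ : Fin (2 ^ k) → Equiv.Perm (Fin m))
    (hσ1 : σ ⟨0, Nat.two_pow_pos k⟩ = 1)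
    (hgreedy : ∀ ℓ : Fin (2 ^ k),
      Antivary (fun j => y (σ ℓ j))
        (fun j => ∑ i ∈ Finset.univ.filter (fun i : Fin (2 ^ k) => i < ℓ), y (σ i j))) :
    (1 / ((2 : ℝ) ^ (2 * k) * m)) * ∑ j, (∑ i, y (σ i j)) ^ 2 - ((∑ j, y j) / m) ^ 2 ≤
      (1 / (2 : ℝ) ^ k) * ((∑ j, y j ^ 2) / m - ((∑ j, y j) / m) ^ 2) := by
  have hm' : (0 : ℝ) < m := Nat.cast_pos.mpr hm
  set c : ℝ := (2 : ℝ) ^ k with hc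
  have hc0 : (0 : ℝ) < c := by positivity
  set S : ℝ := ∑ j, y j with hS
  set Q : ℝ := ∑ j, y j ^ 2 with hQ
  have hcN : ((2 ^ k : ℕ) : ℝ) = c := by push_cast; rfl
  have hperm : ∀ i : Fin (2 ^ k), ∑ j, y (σ i j) = S := fun i => Equiv.sum_comp (σ i) y
  have hperm2 : ∀ i : Fin (2 ^ k), ∑ j, y (σ i j) ^ 2 = Q := fun i =>
    Equiv.sum_comp (σ i) (fun x => y x ^ 2)
  have hPsum : ∀ ℓ : Fin (2 ^ k),
      ∑ j, ∑ i ∈ Finset.univ.filter (fun i : Fin (2 ^ k) => i < ℓ), y (σ i j)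
        = (ℓ : ℕ) * S := by
    intro ℓ
    rw [Finset.sum_comm]
    rw [Finset.sum_congr rfl fun i _ => hperm i, Finset.sum_const, nsmul_eq_mul]
    congr 1
    have h : Finset.univ.filter (fun i : Fin (2 ^ k) => i < ℓ) = Finset.Iio ℓ := by
      ext x; simp
    rw [h, Fin.card_Iio]
  have key : ∀ ℓ : Fin (2 ^ k),
      ∑ j, y (σ ℓ j) * (∑ i ∈ Finset.univ.filter (fun i : Fin (2 ^ k) => i < ℓ), y (σ i j))
        ≤ (ℓ : ℕ) * S ^ 2 / m := by
    intro ℓ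
    have h := (hgreedy ℓ).card_mul_sum_le_sum_mul_sum
    rw [Fintype.card_fin] at h
    rw [hperm ℓ, hPsum ℓ] at h
    rw [le_div_iff₀ hm']
    nlinarith [h]
  -- expand the square of the sum
  have expand : ∀ j, (∑ i, y (σ i j)) ^ 2 =
      (∑ i, y (σ i j) ^ 2) +
        2 * ∑ i, y (σ i j) *
          ∑ i' ∈ Finset.univ.filter (· < i), y (σ i' j) :=
    fun j => sq_sum_eq_aux Finset.univ (fun i => y (σ i j))
  have gauss : ∑ i : Fin (2 ^ k), ((i : ℕ) : ℝ) = c * (c - 1) / 2 := by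
    rw [Fin.sum_univ_eq_sum_range (fun i => (i : ℝ)) (2 ^ k), gauss_real, hcN]
  have hsum : ∑ j, (∑ i, y (σ i j)) ^ 2 ≤ c * Q + c * (c - 1) * S ^ 2 / m := by
    calc ∑ j, (∑ i, y (σ i j)) ^ 2
        = (∑ j, ∑ i, y (σ i j) ^ 2) +
            2 * ∑ j, ∑ i, y (σ i j) *
              ∑ i' ∈ Finset.univ.filter (· < i), y (σ i' j) := by
          rw [Finset.sum_congr rfl fun j _ => expand j, Finset.sum_add_distrib,
            ← Finset.mul_sum]
      _ = c * Q + 2 * ∑ i : Fin (2 ^ k), ∑ j, y (σ i j) *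
              ∑ i' ∈ Finset.univ.filter (· < i), y (σ i' j) := by
          rw [Finset.sum_comm]
          rw [Finset.sum_congr rfl fun i _ => hperm2 i, Finset.sum_const, nsmul_eq_mul,
            Finset.card_univ, Fintype.card_fin, hcN]
          rw [Finset.sum_comm]
      _ ≤ c * Q + 2 * ∑ i : Fin (2 ^ k), ((i : ℕ) : ℝ) * S ^ 2 / m := by
          gcongr with i _
          exact key i
      _ = c * Q + c * (c - 1) * S ^ 2 / m := by
          simp_rw [mul_div_assoc]
          rw [← Finset.sum_mul, gauss]
          ring
  have h2k : (2 : ℝ) ^ (2 * k) = c ^ 2 := by rw [two_mul, pow_add]; ring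
  rw [h2k]
  have hfrac : 0 ≤ 1 / (c ^ 2 * m) := by positivity
  have step := mul_le_mul_of_nonneg_left hsum hfrac
  have eqfinal : 1 / (c ^ 2 * m) * (c * Q + c * (c - 1) * S ^ 2 / m) - (S / m) ^ 2
      = 1 / c * (Q / m - (S / m) ^ 2) := by
    field_simp
    ring
  linarith
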